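/- The dense generalized moment problem and its ideal-sparse reformulation have equal optimal values: val = val^isp. -/

import Mathlib

open MvPolynomial MeasureTheory

/-- Padding a vector indexed by a clique `V` with zeros outside `V`. -/
noncomputable def padMap {n : ℕ} (V : Finset (Fin n)) (y : ↥V → ℝ) : Fin n → ℝ :=
  fun i => if h : i ∈ V then y ⟨i, h⟩ else 0

lemma continuous_padMap {n : ℕ} (V : Finset (Fin n)) : Continuous (padMap V) := by
  apply continuous_pi
  intro i
  by_cases h : i ∈ V
  · simpa [padMap, h] using continuous_apply (⟨i, h⟩ : ↥V)
  · simpa [padMap, h] using continuous_const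

lemma measurable_padMap {n : ℕ} (V : Finset (Fin n)) : Measurable (padMap V) :=
  (continuous_padMap V).measurable

lemma measurable_resMap {n : ℕ} (V : Finset (Fin n)) :
    Measurable (fun (x : Fin n → ℝ) (i : ↥V) => x i) :=
  measurable_pi_lambda _ fun i => measurable_pi_apply (i : Fin n)

lemma padMap_resMap {n : ℕ} (V : Finset (Fin n)) (x : Fin n → ℝ)
    (hx : ∀ i, i ∉ V → x i = 0) : padMap V (fun i : ↥V => x i) = x := by
  funext i
  by_cases h : i ∈ V
  · simp [padMap, h]
  · simp [padMap, h, hx i h]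

lemma exists_maximal_clique {n : ℕ} (G : SimpleGraph (Fin n)) (S : Finset (Fin n))
    (hS : G.IsClique (S : Set (Fin n))) :
    ∃ T : Finset (Fin n), (G.IsClique (T : Set (Fin n)) ∧
      ∀ S' : Finset (Fin n), G.IsClique (S' : Set (Fin n)) → T ⊆ S' → S' = T) ∧ S ⊆ T := by
  classical
  set C : Finset (Finset (Fin n)) :=
    Finset.univ.filter (fun T => G.IsClique (T : Set (Fin n)) ∧ S ⊆ T) with hC
  have hSC : S ∈ C := by simp [hC, hS]
  obtain ⟨T, hTC, hTmax⟩ := Finset.exists_max_image C Finset.card ⟨S, hSC⟩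
  rw [hC, Finset.mem_filter] at hTC
  refine ⟨T, ⟨hTC.2.1, fun S' hS' hTS' => ?_⟩, hTC.2.2⟩
  have hS'C : S' ∈ C := by
    rw [hC, Finset.mem_filter]
    exact ⟨Finset.mem_univ _, hS', hTC.2.2.trans hTS'⟩
  exact (Finset.eq_of_subset_of_card_le hTS' (hTmax S' hS'C)).symm


/-- The dense generalized moment problem and its ideal-sparse
reformulation have equal optimal values: `val = val^isp` (computed in `EReal`, so that the
infimum of the empty set is `+∞`).  Here `V 1, …, V p` are the maximal cliques of `G`, the
sparse problem has one measure per clique, living on `ℝ^{V k}`, supported on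
`K_k = {y : pad y ∈ K}`, and `f|V_k (y) = f(pad y)`. -/
theorem dense_gmp_eq_ideal_sparse_gmp
    (n m N p : ℕ) (G : SimpleGraph (Fin n))
    (g : Fin m → MvPolynomial (Fin n) ℝ)
    (f0 : MvPolynomial (Fin n) ℝ) (f : Fin N → MvPolynomial (Fin n) ℝ) (a : Fin N → ℝ)
    (K : Set (Fin n → ℝ))
    (hK : K = {x | (∀ j, 0 ≤ eval x (g j)) ∧
      ∀ i j : Fin n, i ≠ j → ¬ G.Adj i j → x i * x j = 0})
    (V : Fin p → Finset (Fin n))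
    (hmax : ∀ k, G.IsClique (V k : Set (Fin n)) ∧
      ∀ S : Finset (Fin n), G.IsClique (S : Set (Fin n)) → V k ⊆ S → S = V k)
    (hall : ∀ S : Finset (Fin n),
      (G.IsClique (S : Set (Fin n)) ∧
        ∀ S' : Finset (Fin n), G.IsClique (S' : Set (Fin n)) → S ⊆ S' → S' = S) →
      ∃ k, V k = S) :
    sInf {v : EReal | ∃ μ : Measure (Fin n → ℝ), IsFiniteMeasure μ ∧
        μ Kᶜ = 0 ∧
        Integrable (fun x => eval x f0) μ ∧
        (∀ i, Integrable (fun x => eval x (f i)) μ) ∧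
        (∀ i, ∫ x, eval x (f i) ∂μ = a i) ∧
        v = ((∫ x, eval x f0 ∂μ : ℝ) : EReal)}
    = sInf {v : EReal | ∃ μ : (k : Fin p) → Measure (↥(V k) → ℝ),
        (∀ k, IsFiniteMeasure (μ k)) ∧
        (∀ k, μ k {y | padMap (V k) y ∈ K}ᶜ = 0) ∧
        (∀ k, Integrable (fun y => eval (padMap (V k) y) f0) (μ k)) ∧
        (∀ k i, Integrable (fun y => eval (padMap (V k) y) (f i)) (μ k)) ∧
        (∀ i, ∑ k, ∫ y, eval (padMap (V k) y) (f i) ∂(μ k) = a i) ∧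
        v = ((∑ k, ∫ y, eval (padMap (V k) y) f0 ∂(μ k) : ℝ) : EReal)} := by
  classical
  -- K is closed, hence measurable
  have hKclosed : IsClosed K := by
    have : K = (⋂ j, {x : Fin n → ℝ | 0 ≤ eval x (g j)}) ∩
        ⋂ (i : Fin n), ⋂ (j : Fin n), ⋂ (_ : i ≠ j), ⋂ (_ : ¬ G.Adj i j),
          {x : Fin n → ℝ | x i * x j = 0} := by
      rw [hK]; ext x
      simp only [Set.mem_setOf_eq, Set.mem_inter_iff, Set.mem_iInter]
    rw [this]
    have h1 : IsClosed (⋂ j, {x : Fin n → ℝ | 0 ≤ eval x (g j)}) :=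
      isClosed_iInter fun j =>
        isClosed_le continuous_const (MvPolynomial.continuous_eval _)
    have h2 : IsClosed (⋂ (i : Fin n), ⋂ (j : Fin n), ⋂ (_ : i ≠ j), ⋂ (_ : ¬ G.Adj i j),
        {x : Fin n → ℝ | x i * x j = 0}) :=
      isClosed_iInter fun i => isClosed_iInter fun j =>
        isClosed_iInter fun _ => isClosed_iInter fun _ =>
          isClosed_eq ((continuous_apply i).mul (continuous_apply j)) continuous_const
    exact h1.inter h2
  have hKmeas : MeasurableSet K := hKclosed.measurableSet
  apply congrArg
  ext v
  constructor
  · -- dense feasible → sparse feasible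
    rintro ⟨ν, hfin, hνK, hint0, hinti, hval, hv⟩
    -- sets B k and A k
    set B : Fin p → Set (Fin n → ℝ) := fun k => {x | ∀ i, i ∉ V k → x i = 0} with hB
    have hBmeas : ∀ k, MeasurableSet (B k) := by
      intro k
      have : B k = ⋂ (i : Fin n), ⋂ (_ : i ∉ V k), {x : Fin n → ℝ | x i = 0} := by
        ext x; simp [hB, Set.mem_iInter]
      rw [this]
      refine MeasurableSet.iInter fun i => MeasurableSet.iInter fun _ => ?_
      exact measurableSet_eq_fun (measurable_pi_apply i) measurable_const
    set A : Fin p → Set (Fin n → ℝ) := fun k =>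
      K ∩ B k ∩ ⋂ (k' : Fin p), ⋂ (_ : k' < k), (B k')ᶜ with hA
    have hAmeas : ∀ k, MeasurableSet (A k) := by
      intro k
      exact (hKmeas.inter (hBmeas k)).inter
        (MeasurableSet.iInter fun k' => MeasurableSet.iInter fun _ => (hBmeas k').compl)
    have hdisj : Pairwise (Function.onFun Disjoint A) := by
      intro k l hkl
      rcases hkl.lt_or_gt with h | h
      · rw [Function.onFun, Set.disjoint_left]
        intro x hxk hxl
        exact (Set.mem_iInter.1 (Set.mem_iInter.1 hxl.2 k) h) hxk.1.2
      · rw [Function.onFun, Set.disjoint_left]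
        intro x hxk hxl
        exact (Set.mem_iInter.1 (Set.mem_iInter.1 hxk.2 l) h) hxl.1.2
    have hcover : (⋃ k, A k) = K := by
      apply Set.Subset.antisymm
      · exact Set.iUnion_subset fun k x hx => hx.1.1
      · intro x hx
        have hxK := hx
        rw [hK] at hx
        set S : Finset (Fin n) := Finset.univ.filter (fun i => x i ≠ 0) with hS
        have hSclique : G.IsClique (S : Set (Fin n)) := by
          intro i hi j hj hij
          simp only [hS, Finset.coe_filter, Set.mem_setOf_eq] at hi hj
          by_contra hadj
          exact mul_ne_zero hi.2 hj.2 (hx.2 i j hij hadj)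
        obtain ⟨T, hT, hST⟩ := exists_maximal_clique G S hSclique
        obtain ⟨k1, hk1⟩ := hall T hT
        have hxB : x ∈ B k1 := by
          intro i hi
          by_contra h
          exact hi (hk1 ▸ hST (by simp [hS, h]))
        obtain ⟨k0, hk0mem, hk0min⟩ := Finset.exists_min_image
          (Finset.univ.filter (fun k => x ∈ B k)) id
          ⟨k1, Finset.mem_filter.2 ⟨Finset.mem_univ _, hxB⟩⟩
        have hk0B : x ∈ B k0 := (Finset.mem_filter.1 hk0mem).2
        refine Set.mem_iUnion.2 ⟨k0, ⟨⟨hxK, hk0B⟩, ?_⟩⟩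
        refine Set.mem_iInter.2 fun k' => Set.mem_iInter.2 fun hk' => fun hmem => ?_
        exact absurd (hk0min k' (Finset.mem_filter.2 ⟨Finset.mem_univ _, hmem⟩))
          (not_le.2 hk')
    -- the sparse measures
    set res : (k : Fin p) → (Fin n → ℝ) → (↥(V k) → ℝ) :=
      fun k x i => x i with hres
    set μ : (k : Fin p) → Measure (↥(V k) → ℝ) :=
      fun k => (ν.restrict (A k)).map (res k) with hμ
    have hpadres : ∀ k, ∀ x ∈ A k, padMap (V k) (res k x) = x := by
      intro k x hx
      exact padMap_resMap (V k) x hx.1.2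
    have hνres : ν.restrict K = ν := by
      apply Measure.restrict_eq_self_of_ae_mem
      exact mem_ae_iff.2 hνK
    -- generic transfer for any polynomial
    have key : ∀ q : MvPolynomial (Fin n) ℝ, Integrable (fun x => eval x q) ν →
        (∀ k, Integrable (fun y => eval (padMap (V k) y) q) (μ k)) ∧
        ∑ k, ∫ y, eval (padMap (V k) y) q ∂(μ k) = ∫ x, eval x q ∂ν := by
      intro q hq
      have haesm : ∀ k, AEStronglyMeasurable (fun y => eval (padMap (V k) y) q) (μ k) :=
        fun k => ((MvPolynomial.continuous_eval q).comp (continuous_padMap (V k))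
          ).aestronglyMeasurable
      have heq : ∀ k, Integrable ((fun y => eval (padMap (V k) y) q) ∘ (res k))
          (ν.restrict (A k)) := by
        intro k
        apply (hq.integrableOn).congr
        refine ((ae_restrict_mem (hAmeas k)).mono fun x hx => ?_)
        simp only [Function.comp_apply, hres]
        rw [padMap_resMap (V k) x hx.1.2]
      have hintk : ∀ k, Integrable (fun y => eval (padMap (V k) y) q) (μ k) := by
        intro k
        simp only [hμ, hres]
        exact (integrable_map_measure (haesm k) (measurable_resMap (V k)).aemeasurable).2
          (heq k)
      refine ⟨hintk, ?_⟩
      have h1 : ∀ k, ∫ y, eval (padMap (V k) y) q ∂(μ k) = ∫ x in A k, eval x q ∂ν := by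
        intro k
        simp only [hμ, hres]
        rw [integral_map (measurable_resMap (V k)).aemeasurable (haesm k)]
        apply setIntegral_congr_fun (hAmeas k)
        intro x hx
        simp only []
        rw [padMap_resMap (V k) x hx.1.2]
      rw [Finset.sum_congr rfl (fun k _ => h1 k)]
      rw [← integral_iUnion_fintype hAmeas hdisj (fun k => hq.integrableOn)]
      rw [hcover, hνres]
    refine ⟨μ, ?_, ?_, (key f0 hint0).1, fun k i => (key (f i) (hinti i)).1 k, ?_, ?_⟩
    · intro k
      constructor
      simp only [hμ, hres]
      rw [Measure.map_apply (measurable_resMap (V k)) MeasurableSet.univ,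
        Set.preimage_univ, Measure.restrict_apply_univ]
      exact measure_lt_top _ _
    · intro k
      have hsm : MeasurableSet ({y : ↥(V k) → ℝ | padMap (V k) y ∈ K}ᶜ) :=
        ((measurable_padMap (V k)) hKmeas).compl
      simp only [hμ, hres]
      rw [Measure.map_apply (measurable_resMap (V k)) hsm]
      rw [Measure.restrict_apply ((measurable_resMap (V k)) hsm)]
      convert measure_empty
      · ext x
        simp only [Set.mem_inter_iff, Set.mem_preimage, Set.mem_compl_iff, Set.mem_setOf_eq,
          Set.mem_empty_iff_false, iff_false, not_and]
        intro hnot hx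
        exact hnot (by rw [padMap_resMap (V k) x hx.1.2]; exact hx.1.1)
      · infer_instance
    · intro i
      rw [(key (f i) (hinti i)).2]
      exact hval i
    · rw [hv, (key f0 hint0).2]
  · -- sparse feasible → dense feasible
    rintro ⟨μ, hfin, hμK, hint0, hinti, hval, hv⟩
    set ν : Measure (Fin n → ℝ) := ∑ k, (μ k).map (padMap (V k)) with hν
    have key : ∀ q : MvPolynomial (Fin n) ℝ,
        (∀ k, Integrable (fun y => eval (padMap (V k) y) q) (μ k)) →
        Integrable (fun x => eval x q) ν ∧
        ∫ x, eval x q ∂ν = ∑ k, ∫ y, eval (padMap (V k) y) q ∂(μ k) := by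
      intro q hq
      have haesm : ∀ k, AEStronglyMeasurable (fun x : Fin n → ℝ => eval x q)
          ((μ k).map (padMap (V k))) :=
        fun k => (MvPolynomial.continuous_eval q).aestronglyMeasurable
      have hik : ∀ k ∈ Finset.univ, Integrable (fun x => eval x q) ((μ k).map (padMap (V k))) := by
        intro k _
        exact (integrable_map_measure (haesm k) (measurable_padMap (V k)).aemeasurable).2 (hq k)
      refine ⟨integrable_finset_sum_measure.2 hik, ?_⟩
      rw [hν, integral_finset_sum_measure hik]
      exact Finset.sum_congr rfl fun k _ =>
        integral_map (measurable_padMap (V k)).aemeasurable (haesm k)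
    refine ⟨ν, ?_, ?_, (key f0 hint0).1, fun i => (key (f i) (hinti · i)).1, ?_, ?_⟩
    · constructor
      rw [hν, Measure.finset_sum_apply]
      refine ENNReal.sum_lt_top.2 fun k _ => ?_
      rw [Measure.map_apply (measurable_padMap (V k)) MeasurableSet.univ]
      exact measure_lt_top (μ k) _
    · rw [hν, Measure.finset_sum_apply]
      refine Finset.sum_eq_zero fun k _ => ?_
      rw [Measure.map_apply (measurable_padMap (V k)) hKmeas.compl]
      exact hμK k
    · intro i
      rw [(key (f i) (hinti · i)).2]
      exact hval i
    · rw [hv, (key f0 hint0).2]
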